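/- Let c be a cap-cup cycle with turning number T(c) ∈ {-2, 0, 2, -6, 6, …} (any even value), and let w be an integer such that w + T(c)/2 is odd. Then there exists an assignment of integer writhe components to the elements of c, producing a twisted cap-cup cycle c', such that the total writhe of c' equals w, the underlying cap-cup cycle U(c') equals c, and the turning number of c' equals ±2. -/

import Mathlib

inductive CapCup : Type
  | capL | capR | cupL | cupR
deriving DecidableEq

def CapCup.isCap : CapCup → Bool
  | .capL => true
  | .capR => true
  | .cupL => false
  | .cupR => false

/-- The turning number of a cap or cup. -/
def CapCup.turn : CapCup → ℤ
  | .capR => 1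
  | .capL => -1
  | .cupR => -1
  | .cupL => 1

/-- The turning number of a twisted cap-cup `(c, w)` is `(-1)^{|w|} · t(c)`. -/
def twistedTurn (p : CapCup × ℤ) : ℤ := (-1 : ℤ) ^ p.2.natAbs * p.1.turn

lemma sum_pm_parity : ∀ (t : List ℤ), (∀ x ∈ t, x = 1 ∨ x = -1) →
    (t.sum + t.length) % 2 = 0 := by
  intro t
  induction t with
  | nil => simp
  | cons a t ih =>
    intro h
    have ha := h a (by simp)
    have ht := ih (fun x hx => h x (by simp [hx]))
    simp only [List.sum_cons, List.length_cons]
    push_cast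
    push_cast at ht
    omega

lemma neg_one_pow_natAbs_even {w : ℤ} (h : Even w) : (-1 : ℤ) ^ w.natAbs = 1 :=
  (Int.natAbs_even.mpr h).neg_one_pow

lemma neg_one_pow_natAbs_odd {w : ℤ} (h : Odd w) : (-1 : ℤ) ^ w.natAbs = -1 :=
  (Int.natAbs_odd.mpr h).neg_one_pow

lemma key : ∀ (n : ℕ) (t : List ℤ), t.length = 2*n + 2 →
    (∀ x ∈ t, x = 1 ∨ x = -1) → ∀ w : ℤ, Odd (w + t.sum / 2) →
    ∃ ws : List ℤ, ws.length = t.length ∧ ws.sum = w ∧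
      (List.zipWith (fun ti wi => (-1:ℤ)^wi.natAbs * ti) t ws).sum = 2 := by
  intro n
  induction n with
  | zero =>
    intro t hlen hpm w hodd
    rcases t with _ | ⟨a, _ | ⟨b, _ | ⟨x, t⟩⟩⟩ <;> simp only [List.length] at hlen <;>
      try omega
    have ha := hpm a (by simp)
    have hb := hpm b (by simp)
    simp only [List.sum_cons, List.sum_nil] at hodd
    rcases ha with rfl | rfl <;> rcases hb with rfl | rfl
    · -- a = 1, b = 1, sum = 2
      have hw : Even w := by
        rw [Int.odd_iff] at hodd; rw [Int.even_iff]; omega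
      refine ⟨[w, 0], by simp, by simp, ?_⟩
      simp [neg_one_pow_natAbs_even hw]
    · -- a = 1, b = -1, sum = 0
      have hw : Even (w - 1) := by
        rw [Int.odd_iff] at hodd; rw [Int.even_iff]; omega
      refine ⟨[w - 1, 1], by simp, by simp, ?_⟩
      simp [neg_one_pow_natAbs_even hw]
    · -- a = -1, b = 1
      have hw : Even (w - 1) := by
        rw [Int.odd_iff] at hodd; rw [Int.even_iff]; omega
      refine ⟨[1, w - 1], by simp, by simp, ?_⟩
      simp [neg_one_pow_natAbs_even hw]
    · -- a = -1, b = -1, sum = -2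
      have hw : Odd (w - 1) := by
        rw [Int.odd_iff] at hodd; rw [Int.odd_iff]; omega
      refine ⟨[1, w - 1], by simp, by simp, ?_⟩
      simp [neg_one_pow_natAbs_odd hw]
  | succ n ih =>
    intro t hlen hpm w hodd
    rcases t with _ | ⟨a, _ | ⟨b, rest⟩⟩ <;> simp only [List.length] at hlen <;>
      try omega
    have ha := hpm a (by simp)
    have hb := hpm b (by simp)
    have hrest : ∀ x ∈ rest, x = 1 ∨ x = -1 := fun x hx => hpm x (by simp [hx])
    have hlenr : rest.length = 2 * n + 2 := by omega
    have hsum : (rest.sum + rest.length) % 2 = 0 := sum_pm_parity rest hrest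
    rw [hlenr] at hsum
    push_cast at hsum
    simp only [List.sum_cons] at hodd
    rw [Int.odd_iff] at hodd
    rcases ha with rfl | rfl <;> rcases hb with rfl | rfl
    · -- a = 1, b = 1 : assign wa = 0 (turn +1), wb = 1 (turn -1)
      obtain ⟨ws, h1, h2, h3⟩ := ih rest hlenr hrest (w - 1)
        (by rw [Int.odd_iff]; omega)
      refine ⟨0 :: 1 :: ws, by simp [h1], by rw [List.sum_cons, List.sum_cons, h2]; ring, ?_⟩
      simp only [List.zipWith_cons_cons, List.sum_cons, h3]
      norm_num
    · -- a = 1, b = -1 : wa = 0, wb = 0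
      obtain ⟨ws, h1, h2, h3⟩ := ih rest hlenr hrest w
        (by rw [Int.odd_iff]; omega)
      refine ⟨0 :: 0 :: ws, by simp [h1], by simp [h2], ?_⟩
      simp only [List.zipWith_cons_cons, List.sum_cons, h3]
      norm_num
    · -- a = -1, b = 1 : wa = 1, wb = 1
      obtain ⟨ws, h1, h2, h3⟩ := ih rest hlenr hrest (w - 2)
        (by rw [Int.odd_iff]; omega)
      refine ⟨1 :: 1 :: ws, by simp [h1], by rw [List.sum_cons, List.sum_cons, h2]; ring, ?_⟩
      simp only [List.zipWith_cons_cons, List.sum_cons, h3]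
      norm_num
    · -- a = -1, b = -1 : wa = 1, wb = 0
      obtain ⟨ws, h1, h2, h3⟩ := ih rest hlenr hrest (w - 1)
        (by rw [Int.odd_iff]; omega)
      refine ⟨1 :: 0 :: ws, by simp [h1], by rw [List.sum_cons, List.sum_cons, h2]; ring, ?_⟩
      simp only [List.zipWith_cons_cons, List.sum_cons, h3]
      norm_num

lemma zip_map_twisted : ∀ (c : List CapCup) (ws : List ℤ),
    (c.zip ws).map twistedTurn =
      List.zipWith (fun ti wi => (-1:ℤ)^wi.natAbs * ti) (c.map CapCup.turn) ws := by
  intro c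
  induction c with
  | nil => intro ws; simp
  | cons a c ih =>
    intro ws
    cases ws with
    | nil => simp
    | cons w ws => simp [twistedTurn, ih]

/-- Let `c` be a cap-cup cycle and `w` an integer with `w + T(c)/2` odd.  Then
one can assign integer writhe components to the elements of `c` (producing a
twisted cap-cup cycle whose underlying cap-cup cycle is `c`) with total
writhe `w` and total turning number `±2`. -/
theorem capCupCycle_writhe_realization (c : List CapCup) (hne : c ≠ [])
    (halt : ∀ i : Fin c.length,
      (c.get i).isCap ≠ (c.get ⟨((i : ℕ) + 1) % c.length,
        Nat.mod_lt _ (List.length_pos_iff.mpr hne)⟩).isCap)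
    (w : ℤ) (hodd : Odd (w + (c.map CapCup.turn).sum / 2)) :
    ∃ ws : List ℤ, ws.length = c.length ∧ ws.sum = w ∧
      (((c.zip ws).map twistedTurn).sum = 2 ∨ ((c.zip ws).map twistedTurn).sum = -2) := by
  have hpos : 0 < c.length := List.length_pos_iff.mpr hne
  -- the cycle has even length
  set nn := c.length with hn
  have hmod : ∀ i : ℕ, i % nn < nn := fun i => Nat.mod_lt _ hpos
  set g : ℕ → Bool := fun i => (c.get ⟨i % nn, hmod i⟩).isCap with hg
  have hstep : ∀ i : ℕ, g (i + 1) = ! g i := by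
    intro i
    have h := halt ⟨i % nn, hmod i⟩
    have hmm : (i + 1) % nn = (i % nn + 1) % nn := by
      rcases Nat.lt_or_ge 1 nn with hlt | hle
      · conv_lhs => rw [Nat.add_mod, Nat.mod_eq_of_lt hlt]
      · have h1 : nn = 1 := by omega
        simp [h1]
    simp only [hg]
    have hget : c.get ⟨(i + 1) % nn, hmod _⟩ = c.get ⟨(i % nn + 1) % nn, hmod _⟩ := by
      congr 1
      exact Fin.mk_eq_mk.mpr hmm
    rw [hget]
    simp only at h
    revert h
    cases hx : (c.get ⟨(i % nn + 1) % nn, hmod _⟩).isCap <;>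
      cases hy : (c.get ⟨i % nn, hmod _⟩).isCap <;>
      simp_all
  have h2g : ∀ i : ℕ, g (2 * i) = g 0 := by
    intro i
    induction i with
    | zero => rfl
    | succ i ih =>
      have : 2 * (i + 1) = 2 * i + 1 + 1 := by ring
      rw [this, hstep, hstep, Bool.not_not, ih]
  have hg0 : g nn = g 0 := by simp only [hg, Nat.mod_self, Nat.zero_mod]
  have heven : nn % 2 = 0 := by
    by_contra hodd'
    have hnn : nn = 2 * (nn / 2) + 1 := by omega
    have := hstep (2 * (nn / 2))
    rw [← hnn, hg0, h2g] at this
    exact (Bool.not_ne_self (g 0)).symm this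
  have hlen : (c.map CapCup.turn).length = 2 * (nn / 2 - 1) + 2 := by
    rw [List.length_map]; omega
  have hpm : ∀ x ∈ c.map CapCup.turn, x = 1 ∨ x = -1 := by
    intro x hx
    obtain ⟨a, _, rfl⟩ := List.mem_map.mp hx
    cases a <;> simp [CapCup.turn]
  obtain ⟨ws, h1, h2, h3⟩ := key (nn / 2 - 1) (c.map CapCup.turn) hlen hpm w hodd
  refine ⟨ws, by simpa using h1, h2, Or.inl ?_⟩
  rw [zip_map_twisted, h3]
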